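/- Let a, b be real with a + b > 0 and a − b > 0, let B = [[a, b], [b, a]], let Δt > 0 and 0 ≤ ν ≤ 1. Define the half ODE step O(ξ)_j = exp(−(Δt/2)·B) ξ_j applied pointwise to ξ : ℤ → ℝ², and the PDE step P which applies the minmod flux-limited Lax–Wendroff update with CFL number ν to the first component rightward (using differences ξ⁺_j − ξ⁺_{j−1}) and to the second component leftward (using differences ξ⁻_{j+1} − ξ⁻_j). Then for every finitely supported ξ : ℤ → ℝ², the full Strang-split step ξ ↦ O(P(O(ξ))) satisfies both Σ_j ‖(O∘P∘O)(ξ)_{j+1} − (O∘P∘O)(ξ)_j‖₁ ≤ Σ_j ‖ξ_{j+1} − ξ_j‖₁ and Σ_j ‖(O∘P∘O)(ξ)_j‖₂² ≤ Σ_j ‖ξ_j‖₂². -/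

import Mathlib

/-- `minmod(p, q) = 0` if `p·q ≤ 0` and `sign(p)·min(|p|, |q|)` otherwise. -/
noncomputable def minmod (p q : ℝ) : ℝ :=
  if p * q ≤ 0 then 0 else Real.sign p * min |p| |q|

/-- The minmod flux-limited Lax–Wendroff update for rightward advection (uses
differences `u_j − u_{j−1}`) with CFL number `ν`. -/
noncomputable def lwMinmodStepR (ν : ℝ) (u : ℤ → ℝ) : ℤ → ℝ := fun j =>
  u j - ν * (u j - u (j - 1)) -
    (1 / 2) * ν * (1 - ν) *
      (minmod (u j - u (j - 1)) (u (j + 1) - u j) -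
        minmod (u (j - 1) - u (j - 2)) (u j - u (j - 1)))

/-- The mirrored minmod flux-limited Lax–Wendroff update for leftward advection (uses
differences `u_{j+1} − u_j`) with CFL number `ν`. -/
noncomputable def lwMinmodStepL (ν : ℝ) (u : ℤ → ℝ) : ℤ → ℝ := fun j =>
  u j + ν * (u (j + 1) - u j) -
    (1 / 2) * ν * (1 - ν) *
      (minmod (u (j + 1) - u j) (u (j + 2) - u (j + 1)) -
        minmod (u j - u (j - 1)) (u (j + 1) - u j))

/-- The PDE step of the splitting scheme: the rightward minmod Lax–Wendroff update on
the first component and the leftward one on the second component. -/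
noncomputable def pdeStep (ν : ℝ) (ξ : ℤ → Fin 2 → ℝ) : ℤ → Fin 2 → ℝ := fun j =>
  ![lwMinmodStepR ν (fun k => ξ k 0) j, lwMinmodStepL ν (fun k => ξ k 1) j]

/-- The half ODE step of the splitting scheme: pointwise application of
`exp(−(Δt/2)·B)`. -/
noncomputable def odeHalfStep (B : Matrix (Fin 2) (Fin 2) ℝ) (Δt : ℝ)
    (ξ : ℤ → Fin 2 → ℝ) : ℤ → Fin 2 → ℝ := fun j =>
  (NormedSpace.exp ((-(Δt / 2)) • B)).mulVec (ξ j)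

section Aux

lemma minmod_left (p q : ℝ) : minmod p q * (minmod p q - p) ≤ 0 := by
  unfold minmod
  split_ifs with h
  · simp
  · push_neg at h
    rcases lt_trichotomy p 0 with hp | hp | hp
    · have hq : q < 0 := by nlinarith
      rw [Real.sign_of_neg hp, abs_of_neg hp, abs_of_neg hq]
      rcases le_total (-p) (-q) with h' | h'
      · rw [min_eq_left h']; nlinarith
      · rw [min_eq_right h']; nlinarith
    · subst hp; simp at h
    · have hq : 0 < q := by nlinarith
      rw [Real.sign_of_pos hp, abs_of_pos hp, abs_of_pos hq]
      rcases le_total p q with h' | h'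
      · rw [min_eq_left h']; nlinarith
      · rw [min_eq_right h']; nlinarith

lemma minmod_right (p q : ℝ) : minmod p q * (minmod p q - q) ≤ 0 := by
  unfold minmod
  split_ifs with h
  · simp
  · push_neg at h
    rcases lt_trichotomy p 0 with hp | hp | hp
    · have hq : q < 0 := by nlinarith
      rw [Real.sign_of_neg hp, abs_of_neg hp, abs_of_neg hq]
      rcases le_total (-p) (-q) with h' | h'
      · rw [min_eq_left h']; nlinarith
      · rw [min_eq_right h']; nlinarith
    · subst hp; simp at h
    · have hq : 0 < q := by nlinarith
      rw [Real.sign_of_pos hp, abs_of_pos hp, abs_of_pos hq]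
      rcases le_total p q with h' | h'
      · rw [min_eq_left h']; nlinarith
      · rw [min_eq_right h']; nlinarith

lemma minmod_zero_zero : minmod 0 0 = 0 := by simp [minmod]

lemma key_tvd_aux (ν p m M : ℝ) (hν0 : 0 ≤ ν) (hν1 : ν ≤ 1) (hp : 0 ≤ p)
    (hm : m * (m - p) ≤ 0) (hM : M * (M - p) ≤ 0) :
    |(1 - ν) * p - 1 / 2 * ν * (1 - ν) * (M - m)| +
      |ν * p + 1 / 2 * ν * (1 - ν) * (M - m)| ≤ |p| := by
  have hm0 : 0 ≤ m := by nlinarith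
  have hmp : m ≤ p := by nlinarith
  have hM0 : 0 ≤ M := by nlinarith
  have hMp : M ≤ p := by nlinarith
  have hA : 0 ≤ ν * (1 - ν) * (p - M) := mul_nonneg (mul_nonneg hν0 (by linarith)) (by linarith)
  have hA2 : 0 ≤ ν * (1 - ν) * m := mul_nonneg (mul_nonneg hν0 (by linarith)) hm0
  have hA3 : 0 ≤ (1 - ν) * p := mul_nonneg (by linarith) hp
  have hA4 : 0 ≤ (1 - ν) * (1 - ν) * p := mul_nonneg (mul_nonneg (by linarith) (by linarith)) hp
  have hB1 : 0 ≤ ν * (1 - ν) * M := mul_nonneg (mul_nonneg hν0 (by linarith)) hM0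
  have hB2 : 0 ≤ ν * (1 - ν) * (p - m) := mul_nonneg (mul_nonneg hν0 (by linarith)) (by linarith)
  have hB3 : 0 ≤ ν * p := mul_nonneg hν0 hp
  have hB5 : 0 ≤ ν * ν * p := mul_nonneg (mul_nonneg hν0 hν0) hp
  have h1 : 0 ≤ (1 - ν) * p - 1 / 2 * ν * (1 - ν) * (M - m) := by nlinarith [hA, hA2, hA3, hA4]
  have h2 : 0 ≤ ν * p + 1 / 2 * ν * (1 - ν) * (M - m) := by nlinarith [hB1, hB2, hB3, hB5]
  rw [abs_of_nonneg h1, abs_of_nonneg h2, abs_of_nonneg hp]; linarith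

lemma key_tvd (ν p m M : ℝ) (hν0 : 0 ≤ ν) (hν1 : ν ≤ 1)
    (hm : m * (m - p) ≤ 0) (hM : M * (M - p) ≤ 0) :
    |(1 - ν) * p - 1 / 2 * ν * (1 - ν) * (M - m)| +
      |ν * p + 1 / 2 * ν * (1 - ν) * (M - m)| ≤ |p| := by
  rcases le_total 0 p with hp | hp
  · exact key_tvd_aux ν p m M hν0 hν1 hp hm hM
  · have := key_tvd_aux ν (-p) (-m) (-M) hν0 hν1 (by linarith)
      (by nlinarith) (by nlinarith)
    rw [abs_neg] at this
    calc |(1 - ν) * p - 1 / 2 * ν * (1 - ν) * (M - m)| +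
        |ν * p + 1 / 2 * ν * (1 - ν) * (M - m)|
        = |(1 - ν) * (-p) - 1 / 2 * ν * (1 - ν) * (-M - -m)| +
          |ν * (-p) + 1 / 2 * ν * (1 - ν) * (-M - -m)| := by
          rw [← abs_neg ((1 - ν) * p - 1 / 2 * ν * (1 - ν) * (M - m)),
            ← abs_neg (ν * p + 1 / 2 * ν * (1 - ν) * (M - m))]
          ring_nf
      _ ≤ |p| := this

lemma key_l2_aux (ν p m M : ℝ) (hν0 : 0 ≤ ν) (hν1 : ν ≤ 1) (hp : 0 ≤ p)
    (hm : m * (m - p) ≤ 0) (hM : M * (M - p) ≤ 0) :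
    -2 * p ^ 2 + 2 * (1 - ν) * m * p + 2 * ν * M * p +
      1 / 2 * ν * (1 - ν) * (M - m) ^ 2 ≤ 0 := by
  have hm0 : 0 ≤ m := by nlinarith
  have hmp : m ≤ p := by nlinarith
  have hM0 : 0 ≤ M := by nlinarith
  have hMp : M ≤ p := by nlinarith
  have t1 : 0 ≤ (1 - ν) * (p * (p - m)) := mul_nonneg (by linarith) (mul_nonneg hp (by linarith))
  have t2 : 0 ≤ ν * (p * (p - M)) := mul_nonneg hν0 (mul_nonneg hp (by linarith))
  have t5 : 0 ≤ ν * (1 - ν) * (m * (p - m)) :=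
    mul_nonneg (mul_nonneg hν0 (by linarith)) (mul_nonneg hm0 (by linarith))
  have t6 : 0 ≤ ν * (1 - ν) * (M * (p - M)) :=
    mul_nonneg (mul_nonneg hν0 (by linarith)) (mul_nonneg hM0 (by linarith))
  have t7 : 0 ≤ ν * (1 - ν) * ((p - m) * (p - M)) :=
    mul_nonneg (mul_nonneg hν0 (by linarith)) (mul_nonneg (by linarith) (by linarith))
  have t8 : 0 ≤ (1 - ν) * (1 - ν) * (p * (p - m)) :=
    mul_nonneg (mul_nonneg (by linarith) (by linarith)) (mul_nonneg hp (by linarith))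
  have t9 : 0 ≤ ν * ν * (p * (p - M)) :=
    mul_nonneg (mul_nonneg hν0 hν0) (mul_nonneg hp (by linarith))
  nlinarith [t1, t2, t5, t6, t7, t8, t9]

lemma key_l2 (ν p m M : ℝ) (hν0 : 0 ≤ ν) (hν1 : ν ≤ 1)
    (hm : m * (m - p) ≤ 0) (hM : M * (M - p) ≤ 0) :
    -2 * p ^ 2 + 2 * (1 - ν) * m * p + 2 * ν * M * p +
      1 / 2 * ν * (1 - ν) * (M - m) ^ 2 ≤ 0 := by
  rcases le_total 0 p with hp | hp
  · exact key_l2_aux ν p m M hν0 hν1 hp hm hM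
  · have := key_l2_aux ν (-p) (-m) (-M) hν0 hν1 (by linarith)
      (by nlinarith) (by nlinarith)
    nlinarith [this]

lemma ode_l1 (e₁ e₂ x y : ℝ) (h1 : 0 ≤ e₁) (h1' : e₁ ≤ 1) (h2 : 0 ≤ e₂) (h2' : e₂ ≤ 1) :
    |(e₁ + e₂) / 2 * x + (e₁ - e₂) / 2 * y| + |(e₁ - e₂) / 2 * x + (e₁ + e₂) / 2 * y| ≤
      |x| + |y| := by
  have hkey : |(e₁ + e₂) / 2| + |(e₁ - e₂) / 2| ≤ 1 := by
    rcases le_total e₂ e₁ with h | h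
    · rw [abs_of_nonneg (by linarith), abs_of_nonneg (by linarith)]; linarith
    · rw [abs_of_nonneg (by linarith), abs_of_nonpos (by linarith)]; linarith
  calc |(e₁ + e₂) / 2 * x + (e₁ - e₂) / 2 * y| + |(e₁ - e₂) / 2 * x + (e₁ + e₂) / 2 * y|
      ≤ (|(e₁ + e₂) / 2| * |x| + |(e₁ - e₂) / 2| * |y|) +
        (|(e₁ - e₂) / 2| * |x| + |(e₁ + e₂) / 2| * |y|) := by
        gcongr <;> [skip; skip] <;>
          exact (abs_add_le _ _).trans (by rw [abs_mul, abs_mul])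
    _ = (|(e₁ + e₂) / 2| + |(e₁ - e₂) / 2|) * (|x| + |y|) := by ring
    _ ≤ 1 * (|x| + |y|) := by
        apply mul_le_mul_of_nonneg_right hkey (by positivity)
    _ = |x| + |y| := one_mul _

lemma ode_l2 (e₁ e₂ x y : ℝ) (h1 : 0 ≤ e₁) (h1' : e₁ ≤ 1) (h2 : 0 ≤ e₂) (h2' : e₂ ≤ 1) :
    ((e₁ + e₂) / 2 * x + (e₁ - e₂) / 2 * y) ^ 2 + ((e₁ - e₂) / 2 * x + (e₁ + e₂) / 2 * y) ^ 2 ≤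
      x ^ 2 + y ^ 2 := by
  have k1 : 0 ≤ (1 - e₁ ^ 2) * (x + y) ^ 2 :=
    mul_nonneg (by nlinarith) (sq_nonneg _)
  have k2 : 0 ≤ (1 - e₂ ^ 2) * (x - y) ^ 2 :=
    mul_nonneg (by nlinarith) (sq_nonneg _)
  nlinarith [k1, k2]

end Aux

section Scheme

noncomputable def du (u : ℤ → ℝ) (j : ℤ) : ℝ := u (j + 1) - u j

noncomputable def mmu (u : ℤ → ℝ) (j : ℤ) : ℝ := minmod (du u (j - 1)) (du u j)

lemma lwR_eq (ν : ℝ) (u : ℤ → ℝ) (j : ℤ) :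
    lwMinmodStepR ν u j =
      u j - ν * du u (j - 1) - 1 / 2 * ν * (1 - ν) * (mmu u j - mmu u (j - 1)) := by
  unfold lwMinmodStepR mmu du
  rw [show j - 1 - 1 + 1 = j - 1 from by ring, show j - 1 - 1 = j - 2 from by ring,
    show j - 1 + 1 = j from by ring]

lemma lwL_eq (ν : ℝ) (u : ℤ → ℝ) (j : ℤ) :
    lwMinmodStepL ν u j =
      u j + ν * du u j - 1 / 2 * ν * (1 - ν) * (mmu u (j + 1) - mmu u j) := by
  unfold lwMinmodStepL mmu du
  rw [show j + 1 - 1 = j from by ring, show j + 1 + 1 = j + 2 from by ring]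
  ring

lemma mmu_le_right (u : ℤ → ℝ) (j : ℤ) : mmu u j * (mmu u j - du u j) ≤ 0 :=
  minmod_right _ _

lemma mmu_le_left (u : ℤ → ℝ) (j : ℤ) : mmu u j * (mmu u j - du u (j - 1)) ≤ 0 :=
  minmod_left _ _

lemma mmu_succ_le_left (u : ℤ → ℝ) (j : ℤ) : mmu u (j + 1) * (mmu u (j + 1) - du u j) ≤ 0 := by
  have := mmu_le_left u (j + 1)
  rwa [show j + 1 - 1 = j from by ring] at this

/-- All integers within distance 4 of `s`. -/
noncomputable def shifts (s : Finset ℤ) : Finset ℤ :=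
  (Finset.Icc (-4 : ℤ) 4).biUnion fun c => s.image fun x => x + c

lemma mem_shifts {M : Type*} [Zero M] {s : Finset ℤ} {ζ : ℤ → M}
    (hζ : ∀ j ∉ s, ζ j = 0) :
    ∀ j ∉ shifts s, ∀ c : ℤ, -4 ≤ c → c ≤ 4 → ζ (j + c) = 0 := by
  intro j hj c hc1 hc2
  by_contra h
  apply hj
  have hmem : j + c ∈ s := by
    by_contra h'; exact h (hζ _ h')
  exact Finset.mem_biUnion.2 ⟨-c, by simp; omega,
    Finset.mem_image.2 ⟨j + c, hmem, by ring⟩⟩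

lemma du_vanish {s : Finset ℤ} {u : ℤ → ℝ} (hu : ∀ j ∉ s, u j = 0) :
    ∀ j ∉ shifts s, ∀ c : ℤ, -3 ≤ c → c ≤ 3 → du u (j + c) = 0 := by
  intro j hj c hc1 hc2
  have h1 := mem_shifts hu j hj (c + 1) (by omega) (by omega)
  have h2 := mem_shifts hu j hj c (by omega) (by omega)
  unfold du
  rw [show j + c + 1 = j + (c + 1) from by ring, h1, h2, sub_zero]

lemma mmu_vanish {s : Finset ℤ} {u : ℤ → ℝ} (hu : ∀ j ∉ s, u j = 0) :
    ∀ j ∉ shifts s, ∀ c : ℤ, -2 ≤ c → c ≤ 2 → mmu u (j + c) = 0 := by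
  intro j hj c hc1 hc2
  have h1 := du_vanish hu j hj (c - 1) (by omega) (by omega)
  have h2 := du_vanish hu j hj c (by omega) (by omega)
  unfold mmu
  rw [show j + c - 1 = j + (c - 1) from by ring, h1, h2, minmod_zero_zero]

lemma lwR_vanish {s : Finset ℤ} {u : ℤ → ℝ} (ν : ℝ) (hu : ∀ j ∉ s, u j = 0) :
    ∀ j ∉ shifts s, lwMinmodStepR ν u j = 0 := by
  intro j hj
  rw [lwR_eq]
  have h0 : u j = 0 := by simpa using mem_shifts hu j hj 0 (by omega) (by omega)
  have h1 : du u (j - 1) = 0 := by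
    simpa [← sub_eq_add_neg] using du_vanish hu j hj (-1) (by omega) (by omega)
  have h2 : mmu u j = 0 := by simpa using mmu_vanish hu j hj 0 (by omega) (by omega)
  have h3 : mmu u (j - 1) = 0 := by
    simpa [← sub_eq_add_neg] using mmu_vanish hu j hj (-1) (by omega) (by omega)
  rw [h0, h1, h2, h3]; ring

lemma lwL_vanish {s : Finset ℤ} {u : ℤ → ℝ} (ν : ℝ) (hu : ∀ j ∉ s, u j = 0) :
    ∀ j ∉ shifts s, lwMinmodStepL ν u j = 0 := by
  intro j hj
  rw [lwL_eq]
  have h0 : u j = 0 := by simpa using mem_shifts hu j hj 0 (by omega) (by omega)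
  have h1 : du u j = 0 := by simpa using du_vanish hu j hj 0 (by omega) (by omega)
  have h2 : mmu u j = 0 := by simpa using mmu_vanish hu j hj 0 (by omega) (by omega)
  have h3 : mmu u (j + 1) = 0 := by
    simpa using mmu_vanish hu j hj 1 (by omega) (by omega)
  rw [h0, h1, h2, h3]; ring

lemma tsum_shift_right (f : ℤ → ℝ) : ∑' j : ℤ, f (j + 1) = ∑' j : ℤ, f j :=
  (Equiv.addRight (1 : ℤ)).tsum_eq f

lemma tsum_shift_left (f : ℤ → ℝ) : ∑' j : ℤ, f (j - 1) = ∑' j : ℤ, f j :=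
  (Equiv.subRight (1 : ℤ)).tsum_eq f

lemma R_tvd {ν : ℝ} (hν0 : 0 ≤ ν) (hν1 : ν ≤ 1) (u : ℤ → ℝ) (s : Finset ℤ)
    (hu : ∀ j ∉ s, u j = 0) :
    ∑' j : ℤ, |lwMinmodStepR ν u (j + 1) - lwMinmodStepR ν u j| ≤
      ∑' j : ℤ, |u (j + 1) - u j| := by
  set A : ℤ → ℝ := fun j => (1 - ν) * du u j - 1 / 2 * ν * (1 - ν) * (mmu u (j + 1) - mmu u j)
    with hA
  set Bf : ℤ → ℝ := fun j => ν * du u (j - 1) + 1 / 2 * ν * (1 - ν) * (mmu u j - mmu u (j - 1))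
    with hB
  have hdiff : ∀ j : ℤ, lwMinmodStepR ν u (j + 1) - lwMinmodStepR ν u j = A j + Bf j := by
    intro j
    rw [lwR_eq, lwR_eq, hA, hB]
    simp only
    rw [show (j : ℤ) + 1 - 1 = j from by ring]
    unfold du
    rw [show (j : ℤ) - 1 + 1 = j from by ring]
    ring
  -- vanishing
  have hA0 : ∀ j ∉ shifts s, A j = 0 := by
    intro j hj
    have h1 : du u j = 0 := by simpa using du_vanish hu j hj 0 (by omega) (by omega)
    have h2 : mmu u j = 0 := by simpa using mmu_vanish hu j hj 0 (by omega) (by omega)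
    have h3 : mmu u (j + 1) = 0 := by simpa using mmu_vanish hu j hj 1 (by omega) (by omega)
    rw [hA]; simp only; rw [h1, h2, h3]; ring
  have hB0 : ∀ j ∉ shifts s, Bf j = 0 := by
    intro j hj
    have h1 : du u (j - 1) = 0 := by simpa [← sub_eq_add_neg] using du_vanish hu j hj (-1) (by omega) (by omega)
    have h2 : mmu u j = 0 := by simpa using mmu_vanish hu j hj 0 (by omega) (by omega)
    have h3 : mmu u (j - 1) = 0 := by simpa [← sub_eq_add_neg] using mmu_vanish hu j hj (-1) (by omega) (by omega)
    rw [hB]; simp only; rw [h1, h2, h3]; ring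
  have hB0' : ∀ j ∉ shifts s, Bf (j + 1) = 0 := by
    intro j hj
    have h1 : du u j = 0 := by simpa using du_vanish hu j hj 0 (by omega) (by omega)
    have h2 : mmu u (j + 1) = 0 := by simpa using mmu_vanish hu j hj 1 (by omega) (by omega)
    have h3 : mmu u j = 0 := by simpa using mmu_vanish hu j hj 0 (by omega) (by omega)
    rw [hB]; simp only
    rw [show (j : ℤ) + 1 - 1 = j from by ring, h1, h2, h3]; ring
  have hSA : Summable fun j => |A j| :=
    summable_of_ne_finset_zero (s := shifts s) fun j hj => by rw [hA0 j hj, abs_zero]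
  have hSB : Summable fun j => |Bf j| :=
    summable_of_ne_finset_zero (s := shifts s) fun j hj => by rw [hB0 j hj, abs_zero]
  have hSB' : Summable fun j => |Bf (j + 1)| :=
    summable_of_ne_finset_zero (s := shifts s) fun j hj => by rw [hB0' j hj, abs_zero]
  have hSd : Summable fun j : ℤ => |lwMinmodStepR ν u (j + 1) - lwMinmodStepR ν u j| :=
    summable_of_ne_finset_zero (s := shifts s) fun j hj => by
      rw [hdiff j, hA0 j hj, hB0 j hj]
      · simp
  have hSu : Summable fun j : ℤ => |u (j + 1) - u j| :=
    summable_of_ne_finset_zero (s := shifts s) fun j hj => by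
      have : du u j = 0 := by simpa using du_vanish hu j hj 0 (by omega) (by omega)
      unfold du at this
      rw [this, abs_zero]
  have hkey : ∀ j : ℤ, |A j| + |Bf (j + 1)| ≤ |u (j + 1) - u j| := by
    intro j
    have h1 : mmu u j * (mmu u j - du u j) ≤ 0 := mmu_le_right u j
    have h2 : mmu u (j + 1) * (mmu u (j + 1) - du u j) ≤ 0 := mmu_succ_le_left u j
    have hB1 : Bf (j + 1) = ν * du u j + 1 / 2 * ν * (1 - ν) * (mmu u (j + 1) - mmu u j) := by
      rw [hB]; simp only; rw [show (j : ℤ) + 1 - 1 = j from by ring]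
    have := key_tvd ν (du u j) (mmu u j) (mmu u (j + 1)) hν0 hν1 h1 h2
    rw [hA, hB1]
    simp only
    unfold du at this ⊢
    exact this
  calc ∑' j : ℤ, |lwMinmodStepR ν u (j + 1) - lwMinmodStepR ν u j|
      ≤ ∑' j : ℤ, (|A j| + |Bf j|) := by
        refine Summable.tsum_le_tsum (fun j => ?_) hSd (hSA.add hSB)
        rw [hdiff j]; exact abs_add_le _ _
    _ = (∑' j : ℤ, |A j|) + ∑' j : ℤ, |Bf j| := Summable.tsum_add hSA hSB
    _ = (∑' j : ℤ, |A j|) + ∑' j : ℤ, |Bf (j + 1)| := by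
        rw [tsum_shift_right fun j => |Bf j|]
    _ = ∑' j : ℤ, (|A j| + |Bf (j + 1)|) := (Summable.tsum_add hSA hSB').symm
    _ ≤ ∑' j : ℤ, |u (j + 1) - u j| := Summable.tsum_le_tsum hkey (hSA.add hSB') hSu

lemma L_tvd {ν : ℝ} (hν0 : 0 ≤ ν) (hν1 : ν ≤ 1) (u : ℤ → ℝ) (s : Finset ℤ)
    (hu : ∀ j ∉ s, u j = 0) :
    ∑' j : ℤ, |lwMinmodStepL ν u (j + 1) - lwMinmodStepL ν u j| ≤
      ∑' j : ℤ, |u (j + 1) - u j| := by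
  set A : ℤ → ℝ := fun j => (1 - ν) * du u j - 1 / 2 * ν * (1 - ν) * (mmu u j - mmu u (j + 1))
    with hA
  set Bf : ℤ → ℝ :=
    fun j => ν * du u (j + 1) - 1 / 2 * ν * (1 - ν) * (mmu u (j + 2) - mmu u (j + 1)) with hB
  have hdiff : ∀ j : ℤ, lwMinmodStepL ν u (j + 1) - lwMinmodStepL ν u j = A j + Bf j := by
    intro j
    rw [lwL_eq, lwL_eq, hA, hB]
    simp only
    rw [show (j : ℤ) + 1 + 1 = j + 2 from by ring]
    unfold du
    rw [show (j : ℤ) + 2 = j + 1 + 1 from by ring]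
    ring
  have hA0 : ∀ j ∉ shifts s, A j = 0 := by
    intro j hj
    have h1 : du u j = 0 := by simpa using du_vanish hu j hj 0 (by omega) (by omega)
    have h2 : mmu u j = 0 := by simpa using mmu_vanish hu j hj 0 (by omega) (by omega)
    have h3 : mmu u (j + 1) = 0 := by simpa using mmu_vanish hu j hj 1 (by omega) (by omega)
    rw [hA]; simp only; rw [h1, h2, h3]; ring
  have hB0 : ∀ j ∉ shifts s, Bf j = 0 := by
    intro j hj
    have h1 : du u (j + 1) = 0 := by simpa using du_vanish hu j hj 1 (by omega) (by omega)
    have h2 : mmu u (j + 2) = 0 := by simpa using mmu_vanish hu j hj 2 (by omega) (by omega)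
    have h3 : mmu u (j + 1) = 0 := by simpa using mmu_vanish hu j hj 1 (by omega) (by omega)
    rw [hB]; simp only; rw [h1, h2, h3]; ring
  have hB0' : ∀ j ∉ shifts s, Bf (j - 1) = 0 := by
    intro j hj
    have h1 : du u j = 0 := by simpa using du_vanish hu j hj 0 (by omega) (by omega)
    have h2 : mmu u (j + 1) = 0 := by simpa using mmu_vanish hu j hj 1 (by omega) (by omega)
    have h3 : mmu u j = 0 := by simpa using mmu_vanish hu j hj 0 (by omega) (by omega)
    rw [hB]; simp only
    rw [show (j : ℤ) - 1 + 1 = j from by ring, show (j : ℤ) - 1 + 2 = j + 1 from by ring,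
      h1, h2, h3]
    ring
  have hSA : Summable fun j => |A j| :=
    summable_of_ne_finset_zero (s := shifts s) fun j hj => by rw [hA0 j hj, abs_zero]
  have hSB : Summable fun j => |Bf j| :=
    summable_of_ne_finset_zero (s := shifts s) fun j hj => by rw [hB0 j hj, abs_zero]
  have hSB' : Summable fun j => |Bf (j - 1)| :=
    summable_of_ne_finset_zero (s := shifts s) fun j hj => by rw [hB0' j hj, abs_zero]
  have hSd : Summable fun j : ℤ => |lwMinmodStepL ν u (j + 1) - lwMinmodStepL ν u j| :=
    summable_of_ne_finset_zero (s := shifts s) fun j hj => by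
      rw [hdiff j, hA0 j hj, hB0 j hj]
      · simp
  have hSu : Summable fun j : ℤ => |u (j + 1) - u j| :=
    summable_of_ne_finset_zero (s := shifts s) fun j hj => by
      have : du u j = 0 := by simpa using du_vanish hu j hj 0 (by omega) (by omega)
      unfold du at this
      rw [this, abs_zero]
  have hkey : ∀ j : ℤ, |A j| + |Bf (j - 1)| ≤ |u (j + 1) - u j| := by
    intro j
    have h1 : mmu u j * (mmu u j - du u j) ≤ 0 := mmu_le_right u j
    have h2 : mmu u (j + 1) * (mmu u (j + 1) - du u j) ≤ 0 := mmu_succ_le_left u j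
    have hB1 : Bf (j - 1) = ν * du u j + 1 / 2 * ν * (1 - ν) * (mmu u j - mmu u (j + 1)) := by
      rw [hB]; simp only
      rw [show (j : ℤ) - 1 + 1 = j from by ring, show (j : ℤ) - 1 + 2 = j + 1 from by ring]
      ring
    have hk := key_tvd ν (du u j) (mmu u (j + 1)) (mmu u j) hν0 hν1 h2 h1
    rw [hA, hB1]
    simp only
    unfold du at hk
    exact hk
  calc ∑' j : ℤ, |lwMinmodStepL ν u (j + 1) - lwMinmodStepL ν u j|
      ≤ ∑' j : ℤ, (|A j| + |Bf j|) := by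
        refine Summable.tsum_le_tsum (fun j => ?_) hSd (hSA.add hSB)
        rw [hdiff j]; exact abs_add_le _ _
    _ = (∑' j : ℤ, |A j|) + ∑' j : ℤ, |Bf j| := Summable.tsum_add hSA hSB
    _ = (∑' j : ℤ, |A j|) + ∑' j : ℤ, |Bf (j - 1)| := by
        rw [tsum_shift_left fun j => |Bf j|]
    _ = ∑' j : ℤ, (|A j| + |Bf (j - 1)|) := (Summable.tsum_add hSA hSB').symm
    _ ≤ ∑' j : ℤ, |u (j + 1) - u j| := Summable.tsum_le_tsum hkey (hSA.add hSB') hSu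

end Scheme

section L2

lemma R_l2 {ν : ℝ} (hν0 : 0 ≤ ν) (hν1 : ν ≤ 1) (u : ℤ → ℝ) (s : Finset ℤ)
    (hu : ∀ j ∉ s, u j = 0) :
    ∑' j : ℤ, (lwMinmodStepR ν u j) ^ 2 ≤ ∑' j : ℤ, (u j) ^ 2 := by
  set H : ℤ → ℝ := fun j => ν * (u j) ^ 2 + ν * (1 - ν) * (u j * mmu u j) with hH
  set G : ℤ → ℝ := fun j => -2 * (du u j) ^ 2 + 2 * (1 - ν) * (mmu u j) * (du u j) +
    2 * ν * (mmu u (j + 1)) * (du u j) + 1 / 2 * ν * (1 - ν) * (mmu u (j + 1) - mmu u j) ^ 2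
    with hG
  have hid : ∀ j : ℤ, (lwMinmodStepR ν u j) ^ 2 - (u j) ^ 2 =
      (H (j - 1) - H j) + 1 / 2 * ν * (1 - ν) * G (j - 1) := by
    intro j
    rw [lwR_eq, hH, hG]
    simp only
    rw [show (j : ℤ) - 1 + 1 = j from by ring]
    unfold du
    rw [show (j : ℤ) - 1 + 1 = j from by ring]
    ring
  have hGnp : ∀ j : ℤ, G j ≤ 0 := by
    intro j
    have h1 : mmu u j * (mmu u j - du u j) ≤ 0 := mmu_le_right u j
    have h2 : mmu u (j + 1) * (mmu u (j + 1) - du u j) ≤ 0 := mmu_succ_le_left u j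
    have := key_l2 ν (du u j) (mmu u j) (mmu u (j + 1)) hν0 hν1 h1 h2
    rw [hG]; simp only
    calc -2 * (du u j) ^ 2 + 2 * (1 - ν) * (mmu u j) * (du u j) +
        2 * ν * (mmu u (j + 1)) * (du u j) +
        1 / 2 * ν * (1 - ν) * (mmu u (j + 1) - mmu u j) ^ 2 =
        -2 * (du u j) ^ 2 + 2 * (1 - ν) * (mmu u j) * (du u j) +
        2 * ν * (mmu u (j + 1)) * (du u j) +
        1 / 2 * ν * (1 - ν) * (mmu u (j + 1) - mmu u j) ^ 2 := rfl
      _ ≤ 0 := by nlinarith [this]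
  -- vanishing
  have hH0 : ∀ j ∉ shifts s, H j = 0 := by
    intro j hj
    have h0 : u j = 0 := by simpa using mem_shifts hu j hj 0 (by omega) (by omega)
    rw [hH]; simp only; rw [h0]; ring
  have hH0' : ∀ j ∉ shifts s, H (j - 1) = 0 := by
    intro j hj
    have h0 : u (j - 1) = 0 := by simpa [← sub_eq_add_neg] using mem_shifts hu j hj (-1) (by omega) (by omega)
    rw [hH]; simp only; rw [h0]; ring
  have hG0' : ∀ j ∉ shifts s, G (j - 1) = 0 := by
    intro j hj
    have h1 : du u (j - 1) = 0 := by simpa [← sub_eq_add_neg] using du_vanish hu j hj (-1) (by omega) (by omega)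
    have h2 : mmu u (j - 1) = 0 := by simpa [← sub_eq_add_neg] using mmu_vanish hu j hj (-1) (by omega) (by omega)
    have h3 : mmu u j = 0 := by simpa using mmu_vanish hu j hj 0 (by omega) (by omega)
    rw [hG]; simp only
    rw [show (j : ℤ) - 1 + 1 = j from by ring, h1, h2, h3]; ring
  have hSR : Summable fun j : ℤ => (lwMinmodStepR ν u j) ^ 2 :=
    summable_of_ne_finset_zero (s := shifts s) fun j hj => by
      rw [lwR_vanish ν hu j hj]; norm_num
  have hSu : Summable fun j : ℤ => (u j) ^ 2 :=
    summable_of_ne_finset_zero (s := shifts s) fun j hj => by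
      have h0 : u j = 0 := by simpa using mem_shifts hu j hj 0 (by omega) (by omega)
      rw [h0]; norm_num
  have hSH : Summable H :=
    summable_of_ne_finset_zero (s := shifts s) fun j hj => hH0 j hj
  have hSH' : Summable fun j : ℤ => H (j - 1) :=
    summable_of_ne_finset_zero (s := shifts s) fun j hj => hH0' j hj
  have hSHd : Summable fun j : ℤ => H (j - 1) - H j := hSH'.sub hSH
  have hSG' : Summable fun j : ℤ => 1 / 2 * ν * (1 - ν) * G (j - 1) :=
    summable_of_ne_finset_zero (s := shifts s) fun j hj => by rw [hG0' j hj]; ring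
  have hμ : 0 ≤ 1 / 2 * ν * (1 - ν) := by nlinarith
  have hmain : (∑' j : ℤ, (lwMinmodStepR ν u j) ^ 2) - ∑' j : ℤ, (u j) ^ 2 ≤ 0 := by
    rw [← Summable.tsum_sub hSR hSu]
    calc ∑' j : ℤ, ((lwMinmodStepR ν u j) ^ 2 - (u j) ^ 2)
        = ∑' j : ℤ, ((H (j - 1) - H j) + 1 / 2 * ν * (1 - ν) * G (j - 1)) :=
          tsum_congr hid
      _ = (∑' j : ℤ, (H (j - 1) - H j)) + ∑' j : ℤ, 1 / 2 * ν * (1 - ν) * G (j - 1) :=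
          Summable.tsum_add hSHd hSG'
      _ ≤ 0 + 0 := by
          gcongr
          · rw [Summable.tsum_sub hSH' hSH, tsum_shift_left H]
            simp
          · exact tsum_nonpos fun j =>
              mul_nonpos_of_nonneg_of_nonpos hμ (hGnp (j - 1))
      _ = 0 := by ring
  linarith [hmain]

lemma L_l2 {ν : ℝ} (hν0 : 0 ≤ ν) (hν1 : ν ≤ 1) (u : ℤ → ℝ) (s : Finset ℤ)
    (hu : ∀ j ∉ s, u j = 0) :
    ∑' j : ℤ, (lwMinmodStepL ν u j) ^ 2 ≤ ∑' j : ℤ, (u j) ^ 2 := by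
  set H : ℤ → ℝ := fun j => -(ν * (u j) ^ 2) + ν * (1 - ν) * (u j * mmu u j) with hH
  set G : ℤ → ℝ := fun j => -2 * (du u j) ^ 2 + 2 * (1 - ν) * (mmu u (j + 1)) * (du u j) +
    2 * ν * (mmu u j) * (du u j) + 1 / 2 * ν * (1 - ν) * (mmu u j - mmu u (j + 1)) ^ 2
    with hG
  have hid : ∀ j : ℤ, (lwMinmodStepL ν u j) ^ 2 - (u j) ^ 2 =
      (H j - H (j + 1)) + 1 / 2 * ν * (1 - ν) * G j := by
    intro j
    rw [lwL_eq, hH, hG]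
    simp only
    unfold du
    ring
  have hGnp : ∀ j : ℤ, G j ≤ 0 := by
    intro j
    have h1 : mmu u j * (mmu u j - du u j) ≤ 0 := mmu_le_right u j
    have h2 : mmu u (j + 1) * (mmu u (j + 1) - du u j) ≤ 0 := mmu_succ_le_left u j
    have := key_l2 ν (du u j) (mmu u (j + 1)) (mmu u j) hν0 hν1 h2 h1
    rw [hG]; simp only
    nlinarith [this]
  have hH0 : ∀ j ∉ shifts s, H j = 0 := by
    intro j hj
    have h0 : u j = 0 := by simpa using mem_shifts hu j hj 0 (by omega) (by omega)
    rw [hH]; simp only; rw [h0]; ring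
  have hH0' : ∀ j ∉ shifts s, H (j + 1) = 0 := by
    intro j hj
    have h0 : u (j + 1) = 0 := by simpa using mem_shifts hu j hj 1 (by omega) (by omega)
    rw [hH]; simp only; rw [h0]; ring
  have hG0 : ∀ j ∉ shifts s, G j = 0 := by
    intro j hj
    have h1 : du u j = 0 := by simpa using du_vanish hu j hj 0 (by omega) (by omega)
    have h2 : mmu u j = 0 := by simpa using mmu_vanish hu j hj 0 (by omega) (by omega)
    have h3 : mmu u (j + 1) = 0 := by simpa using mmu_vanish hu j hj 1 (by omega) (by omega)
    rw [hG]; simp only; rw [h1, h2, h3]; ring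
  have hSL : Summable fun j : ℤ => (lwMinmodStepL ν u j) ^ 2 :=
    summable_of_ne_finset_zero (s := shifts s) fun j hj => by
      rw [lwL_vanish ν hu j hj]; norm_num
  have hSu : Summable fun j : ℤ => (u j) ^ 2 :=
    summable_of_ne_finset_zero (s := shifts s) fun j hj => by
      have h0 : u j = 0 := by simpa using mem_shifts hu j hj 0 (by omega) (by omega)
      rw [h0]; norm_num
  have hSH : Summable H :=
    summable_of_ne_finset_zero (s := shifts s) fun j hj => hH0 j hj
  have hSH' : Summable fun j : ℤ => H (j + 1) :=
    summable_of_ne_finset_zero (s := shifts s) fun j hj => hH0' j hj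
  have hSHd : Summable fun j : ℤ => H j - H (j + 1) := hSH.sub hSH'
  have hSG : Summable fun j : ℤ => 1 / 2 * ν * (1 - ν) * G j :=
    summable_of_ne_finset_zero (s := shifts s) fun j hj => by rw [hG0 j hj]; ring
  have hμ : 0 ≤ 1 / 2 * ν * (1 - ν) := by nlinarith
  have hmain : (∑' j : ℤ, (lwMinmodStepL ν u j) ^ 2) - ∑' j : ℤ, (u j) ^ 2 ≤ 0 := by
    rw [← Summable.tsum_sub hSL hSu]
    calc ∑' j : ℤ, ((lwMinmodStepL ν u j) ^ 2 - (u j) ^ 2)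
        = ∑' j : ℤ, ((H j - H (j + 1)) + 1 / 2 * ν * (1 - ν) * G j) := tsum_congr hid
      _ = (∑' j : ℤ, (H j - H (j + 1))) + ∑' j : ℤ, 1 / 2 * ν * (1 - ν) * G j :=
          Summable.tsum_add hSHd hSG
      _ ≤ 0 + 0 := by
          gcongr
          · rw [Summable.tsum_sub hSH hSH', tsum_shift_right H]
            simp
          · exact tsum_nonpos fun j => mul_nonpos_of_nonneg_of_nonpos hμ (hGnp j)
      _ = 0 := by ring
  linarith [hmain]

end L2

section ODE

open Matrix in
lemma exp_B (a b s : ℝ) :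
    NormedSpace.exp ((-s) • (!![a, b; b, a] : Matrix (Fin 2) (Fin 2) ℝ)) =
      !![(Real.exp (-s * (a + b)) + Real.exp (-s * (a - b))) / 2,
         (Real.exp (-s * (a + b)) - Real.exp (-s * (a - b))) / 2;
         (Real.exp (-s * (a + b)) - Real.exp (-s * (a - b))) / 2,
         (Real.exp (-s * (a + b)) + Real.exp (-s * (a - b))) / 2] := by
  have hU : (!![1, 1; 1, -1] : Matrix (Fin 2) (Fin 2) ℝ) * !![1/2, 1/2; 1/2, -1/2] = 1 := by
    ext i j; fin_cases i <;> fin_cases j <;>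
      simp [Matrix.mul_apply, Fin.sum_univ_two] <;> norm_num
  have hU' : (!![1/2, 1/2; 1/2, -1/2] : Matrix (Fin 2) (Fin 2) ℝ) * !![1, 1; 1, -1] = 1 := by
    ext i j; fin_cases i <;> fin_cases j <;>
      simp [Matrix.mul_apply, Fin.sum_univ_two] <;> norm_num
  set U : (Matrix (Fin 2) (Fin 2) ℝ)ˣ := ⟨!![1, 1; 1, -1], !![1/2, 1/2; 1/2, -1/2], hU, hU'⟩
  have hdiag : ((-s) • (!![a, b; b, a] : Matrix (Fin 2) (Fin 2) ℝ)) =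
      (U : Matrix (Fin 2) (Fin 2) ℝ) * (Matrix.diagonal ![-s * (a + b), -s * (a - b)]) *
        (↑U⁻¹ : Matrix (Fin 2) (Fin 2) ℝ) := by
    show _ = (!![1, 1; 1, -1] : Matrix (Fin 2) (Fin 2) ℝ) * _ * !![1/2, 1/2; 1/2, -1/2]
    ext i j; fin_cases i <;> fin_cases j <;>
      simp [Matrix.mul_apply, Fin.sum_univ_two, Matrix.diagonal, Matrix.vecHead,
        Matrix.vecTail] <;> ring
  rw [hdiag, Matrix.exp_units_conj, Matrix.exp_diagonal]
  show (!![1, 1; 1, -1] : Matrix (Fin 2) (Fin 2) ℝ) * _ * !![1/2, 1/2; 1/2, -1/2] = _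
  have hexp : NormedSpace.exp (![-s * (a + b), -s * (a - b)] : Fin 2 → ℝ) =
      ![Real.exp (-s * (a + b)), Real.exp (-s * (a - b))] := by
    funext i
    rw [Pi.coe_exp, ← Real.exp_eq_exp_ℝ]; fin_cases i <;> simp
  rw [hexp]
  ext i j; fin_cases i <;> fin_cases j <;>
    simp [Matrix.mul_apply, Fin.sum_univ_two, Matrix.diagonal, Matrix.vecHead,
      Matrix.vecTail] <;> ring

end ODE

/-- The full Strang-split step (ODE half-step, minmod Lax–Wendroff PDE step, ODE
half-step) with `B = [[a, b], [b, a]]`, `a + b > 0`, `a − b > 0`, `Δt > 0` and CFL number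
`0 ≤ ν ≤ 1` is total-variation-diminishing and does not increase the discrete Lyapunov
function on finitely supported `ξ : ℤ → ℝ²`. -/
theorem strang_split_tvd_and_lyapunov (a b Δt ν : ℝ) (hΔt : 0 < Δt)
    (hab₁ : 0 < a + b) (hab₂ : 0 < a - b) (hν₀ : 0 ≤ ν) (hν₁ : ν ≤ 1)
    (B : Matrix (Fin 2) (Fin 2) ℝ) (hB : B = !![a, b; b, a])
    (ξ : ℤ → Fin 2 → ℝ) (hfin : (Function.support ξ).Finite) :
    (∑' j : ℤ,
        (|(odeHalfStep B Δt (pdeStep ν (odeHalfStep B Δt ξ)) (j + 1) -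
            odeHalfStep B Δt (pdeStep ν (odeHalfStep B Δt ξ)) j) 0| +
         |(odeHalfStep B Δt (pdeStep ν (odeHalfStep B Δt ξ)) (j + 1) -
            odeHalfStep B Δt (pdeStep ν (odeHalfStep B Δt ξ)) j) 1|) ≤
      ∑' j : ℤ, (|(ξ (j + 1) - ξ j) 0| + |(ξ (j + 1) - ξ j) 1|)) ∧
    (∑' j : ℤ,
        ((odeHalfStep B Δt (pdeStep ν (odeHalfStep B Δt ξ)) j 0) ^ 2 +
         (odeHalfStep B Δt (pdeStep ν (odeHalfStep B Δt ξ)) j 1) ^ 2) ≤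
      ∑' j : ℤ, ((ξ j 0) ^ 2 + (ξ j 1) ^ 2)) := by
  set e₁ : ℝ := Real.exp (-(Δt / 2) * (a + b)) with he₁def
  set e₂ : ℝ := Real.exp (-(Δt / 2) * (a - b)) with he₂def
  have he₁ : 0 ≤ e₁ := (Real.exp_pos _).le
  have he₂ : 0 ≤ e₂ := (Real.exp_pos _).le
  have he₁' : e₁ ≤ 1 := by
    rw [he₁def, Real.exp_le_one_iff]; nlinarith
  have he₂' : e₂ ≤ 1 := by
    rw [he₂def, Real.exp_le_one_iff]; nlinarith
  have hexp : NormedSpace.exp ((-(Δt / 2)) • B) =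
      !![(e₁ + e₂) / 2, (e₁ - e₂) / 2; (e₁ - e₂) / 2, (e₁ + e₂) / 2] := by
    rw [hB, he₁def, he₂def]; exact exp_B a b (Δt / 2)
  have happ : ∀ (ζ : ℤ → Fin 2 → ℝ) (j : ℤ), odeHalfStep B Δt ζ j =
      ![(e₁ + e₂) / 2 * ζ j 0 + (e₁ - e₂) / 2 * ζ j 1,
        (e₁ - e₂) / 2 * ζ j 0 + (e₁ + e₂) / 2 * ζ j 1] := by
    intro ζ j
    unfold odeHalfStep
    rw [hexp]
    funext i
    fin_cases i <;>
      simp [Matrix.mulVec, dotProduct, Fin.sum_univ_two]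
  have happ0 : ∀ (ζ : ℤ → Fin 2 → ℝ) (j : ℤ), odeHalfStep B Δt ζ j 0 =
      (e₁ + e₂) / 2 * ζ j 0 + (e₁ - e₂) / 2 * ζ j 1 := by
    intro ζ j; rw [happ]; simp
  have happ1 : ∀ (ζ : ℤ → Fin 2 → ℝ) (j : ℤ), odeHalfStep B Δt ζ j 1 =
      (e₁ - e₂) / 2 * ζ j 0 + (e₁ + e₂) / 2 * ζ j 1 := by
    intro ζ j; rw [happ]; simp
  set ζ₁ : ℤ → Fin 2 → ℝ := odeHalfStep B Δt ξ with hζ₁def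
  set ζ₂ : ℤ → Fin 2 → ℝ := pdeStep ν ζ₁ with hζ₂def
  set ζ₃ : ℤ → Fin 2 → ℝ := odeHalfStep B Δt ζ₂ with hζ₃def
  set t : Finset ℤ := hfin.toFinset with htdef
  have hξ0 : ∀ j ∉ t, ξ j = 0 := by
    intro j hj
    by_contra h
    exact hj (by rw [htdef]; exact hfin.mem_toFinset.2 h)
  -- vanishing of intermediate states
  have hOvan : ∀ (ζ : ℤ → Fin 2 → ℝ) (j : ℤ), ζ j = 0 → odeHalfStep B Δt ζ j = 0 := by
    intro ζ j h
    rw [happ, h]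
    funext i; fin_cases i <;> simp
  have hζ₁0 : ∀ j ∉ t, ζ₁ j = 0 := fun j hj => hOvan ξ j (hξ0 j hj)
  have hu₀ : ∀ j ∉ t, (fun k => ζ₁ k 0) j = 0 := by
    intro j hj; simp only; rw [hζ₁0 j hj]; rfl
  have hu₁ : ∀ j ∉ t, (fun k => ζ₁ k 1) j = 0 := by
    intro j hj; simp only; rw [hζ₁0 j hj]; rfl
  have hP0comp : ∀ k : ℤ, ζ₂ k 0 = lwMinmodStepR ν (fun i => ζ₁ i 0) k := by
    intro k; rw [hζ₂def]; simp [pdeStep]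
  have hP1comp : ∀ k : ℤ, ζ₂ k 1 = lwMinmodStepL ν (fun i => ζ₁ i 1) k := by
    intro k; rw [hζ₂def]; simp [pdeStep]
  have hζ₂0 : ∀ j ∉ shifts t, ζ₂ j = 0 := by
    intro j hj
    funext i
    fin_cases i
    · show ζ₂ j 0 = 0
      rw [hP0comp]; exact lwR_vanish ν hu₀ j hj
    · show ζ₂ j 1 = 0
      rw [hP1comp]; exact lwL_vanish ν hu₁ j hj
  have hζ₃0 : ∀ j ∉ shifts t, ζ₃ j = 0 := fun j hj => hOvan ζ₂ j (hζ₂0 j hj)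
  -- TV summand vanishing lemma
  have hTVvan : ∀ (ζ : ℤ → Fin 2 → ℝ) (sz : Finset ℤ), (∀ j ∉ sz, ζ j = 0) →
      ∀ j ∉ shifts sz, |(ζ (j + 1) - ζ j) 0| + |(ζ (j + 1) - ζ j) 1| = 0 := by
    intro ζ sz hz j hj
    have z1 : ζ (j + 1) = 0 := by
      simpa using mem_shifts hz j hj 1 (by omega) (by omega)
    have z0 : ζ j = 0 := by
      simpa using mem_shifts hz j hj 0 (by omega) (by omega)
    rw [z0, z1]; simp
  have hLyvan : ∀ (ζ : ℤ → Fin 2 → ℝ) (sz : Finset ℤ), (∀ j ∉ sz, ζ j = 0) →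
      ∀ j ∉ sz, (ζ j 0) ^ 2 + (ζ j 1) ^ 2 = 0 := by
    intro ζ sz hz j hj
    rw [hz j hj]; simp
  -- pointwise ODE contraction
  have hodeTV : ∀ (ζ : ℤ → Fin 2 → ℝ) (j : ℤ),
      |(odeHalfStep B Δt ζ (j + 1) - odeHalfStep B Δt ζ j) 0| +
        |(odeHalfStep B Δt ζ (j + 1) - odeHalfStep B Δt ζ j) 1| ≤
      |(ζ (j + 1) - ζ j) 0| + |(ζ (j + 1) - ζ j) 1| := by
    intro ζ j
    have d0 : (odeHalfStep B Δt ζ (j + 1) - odeHalfStep B Δt ζ j) 0 =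
        (e₁ + e₂) / 2 * ((ζ (j + 1) - ζ j) 0) + (e₁ - e₂) / 2 * ((ζ (j + 1) - ζ j) 1) := by
      show odeHalfStep B Δt ζ (j + 1) 0 - odeHalfStep B Δt ζ j 0 = _
      rw [happ0, happ0]
      show _ = (e₁ + e₂) / 2 * (ζ (j + 1) 0 - ζ j 0) + (e₁ - e₂) / 2 * (ζ (j + 1) 1 - ζ j 1)
      ring
    have d1 : (odeHalfStep B Δt ζ (j + 1) - odeHalfStep B Δt ζ j) 1 =
        (e₁ - e₂) / 2 * ((ζ (j + 1) - ζ j) 0) + (e₁ + e₂) / 2 * ((ζ (j + 1) - ζ j) 1) := by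
      show odeHalfStep B Δt ζ (j + 1) 1 - odeHalfStep B Δt ζ j 1 = _
      rw [happ1, happ1]
      show _ = (e₁ - e₂) / 2 * (ζ (j + 1) 0 - ζ j 0) + (e₁ + e₂) / 2 * (ζ (j + 1) 1 - ζ j 1)
      ring
    rw [d0, d1]
    exact ode_l1 e₁ e₂ _ _ he₁ he₁' he₂ he₂'
  have hodeLy : ∀ (ζ : ℤ → Fin 2 → ℝ) (j : ℤ),
      (odeHalfStep B Δt ζ j 0) ^ 2 + (odeHalfStep B Δt ζ j 1) ^ 2 ≤
        (ζ j 0) ^ 2 + (ζ j 1) ^ 2 := by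
    intro ζ j
    rw [happ0, happ1]
    exact ode_l2 e₁ e₂ _ _ he₁ he₁' he₂ he₂'
  -- summabilities for TV
  have hSTV : ∀ (ζ : ℤ → Fin 2 → ℝ) (sz : Finset ℤ), (∀ j ∉ sz, ζ j = 0) →
      Summable (fun j : ℤ => |(ζ (j + 1) - ζ j) 0| + |(ζ (j + 1) - ζ j) 1|) := by
    intro ζ sz hz
    exact summable_of_ne_finset_zero (s := shifts sz) (hTVvan ζ sz hz)
  have hSLy : ∀ (ζ : ℤ → Fin 2 → ℝ) (sz : Finset ℤ), (∀ j ∉ sz, ζ j = 0) →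
      Summable (fun j : ℤ => (ζ j 0) ^ 2 + (ζ j 1) ^ 2) := by
    intro ζ sz hz
    exact summable_of_ne_finset_zero (s := sz) (hLyvan ζ sz hz)
  constructor
  · -- TV part
    have step3 : (∑' j : ℤ, (|(ζ₃ (j + 1) - ζ₃ j) 0| + |(ζ₃ (j + 1) - ζ₃ j) 1|)) ≤
        ∑' j : ℤ, (|(ζ₂ (j + 1) - ζ₂ j) 0| + |(ζ₂ (j + 1) - ζ₂ j) 1|) :=
      Summable.tsum_le_tsum (fun j => hodeTV ζ₂ j) (hSTV ζ₃ (shifts t) hζ₃0) (hSTV ζ₂ (shifts t) hζ₂0)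
    have step1 : (∑' j : ℤ, (|(ζ₁ (j + 1) - ζ₁ j) 0| + |(ζ₁ (j + 1) - ζ₁ j) 1|)) ≤
        ∑' j : ℤ, (|(ξ (j + 1) - ξ j) 0| + |(ξ (j + 1) - ξ j) 1|) :=
      Summable.tsum_le_tsum (fun j => hodeTV ξ j) (hSTV ζ₁ t hζ₁0) (hSTV ξ t hξ0)
    have step2 : (∑' j : ℤ, (|(ζ₂ (j + 1) - ζ₂ j) 0| + |(ζ₂ (j + 1) - ζ₂ j) 1|)) ≤
        ∑' j : ℤ, (|(ζ₁ (j + 1) - ζ₁ j) 0| + |(ζ₁ (j + 1) - ζ₁ j) 1|) := by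
      have hf0 : Summable (fun j : ℤ => |(ζ₂ (j + 1) - ζ₂ j) 0|) :=
        summable_of_ne_finset_zero (s := shifts (shifts t)) (by
          intro j hj
          have z1 : ζ₂ (j + 1) = 0 := by
            simpa using mem_shifts hζ₂0 j hj 1 (by omega) (by omega)
          have z0 : ζ₂ j = 0 := by
            simpa using mem_shifts hζ₂0 j hj 0 (by omega) (by omega)
          rw [z0, z1]; simp)
      have hf1 : Summable (fun j : ℤ => |(ζ₂ (j + 1) - ζ₂ j) 1|) :=
        summable_of_ne_finset_zero (s := shifts (shifts t)) (by
          intro j hj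
          have z1 : ζ₂ (j + 1) = 0 := by
            simpa using mem_shifts hζ₂0 j hj 1 (by omega) (by omega)
          have z0 : ζ₂ j = 0 := by
            simpa using mem_shifts hζ₂0 j hj 0 (by omega) (by omega)
          rw [z0, z1]; simp)
      have hg0 : Summable (fun j : ℤ => |(ζ₁ (j + 1) - ζ₁ j) 0|) :=
        summable_of_ne_finset_zero (s := shifts t) (by
          intro j hj
          have z1 : ζ₁ (j + 1) = 0 := by
            simpa using mem_shifts hζ₁0 j hj 1 (by omega) (by omega)
          have z0 : ζ₁ j = 0 := by
            simpa using mem_shifts hζ₁0 j hj 0 (by omega) (by omega)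
          rw [z0, z1]; simp)
      have hg1 : Summable (fun j : ℤ => |(ζ₁ (j + 1) - ζ₁ j) 1|) :=
        summable_of_ne_finset_zero (s := shifts t) (by
          intro j hj
          have z1 : ζ₁ (j + 1) = 0 := by
            simpa using mem_shifts hζ₁0 j hj 1 (by omega) (by omega)
          have z0 : ζ₁ j = 0 := by
            simpa using mem_shifts hζ₁0 j hj 0 (by omega) (by omega)
          rw [z0, z1]; simp)
      have ec0 : ∀ j : ℤ, |(ζ₂ (j + 1) - ζ₂ j) 0| =
          |lwMinmodStepR ν (fun i => ζ₁ i 0) (j + 1) - lwMinmodStepR ν (fun i => ζ₁ i 0) j| := by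
        intro j
        have : (ζ₂ (j + 1) - ζ₂ j) 0 = ζ₂ (j + 1) 0 - ζ₂ j 0 := rfl
        rw [this, hP0comp, hP0comp]
      have ec1 : ∀ j : ℤ, |(ζ₂ (j + 1) - ζ₂ j) 1| =
          |lwMinmodStepL ν (fun i => ζ₁ i 1) (j + 1) - lwMinmodStepL ν (fun i => ζ₁ i 1) j| := by
        intro j
        have : (ζ₂ (j + 1) - ζ₂ j) 1 = ζ₂ (j + 1) 1 - ζ₂ j 1 := rfl
        rw [this, hP1comp, hP1comp]
      calc ∑' j : ℤ, (|(ζ₂ (j + 1) - ζ₂ j) 0| + |(ζ₂ (j + 1) - ζ₂ j) 1|)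
          = (∑' j : ℤ, |(ζ₂ (j + 1) - ζ₂ j) 0|) + ∑' j : ℤ, |(ζ₂ (j + 1) - ζ₂ j) 1| :=
            Summable.tsum_add hf0 hf1
        _ ≤ (∑' j : ℤ, |(ζ₁ (j + 1) - ζ₁ j) 0|) + ∑' j : ℤ, |(ζ₁ (j + 1) - ζ₁ j) 1| := by
            apply add_le_add
            · calc ∑' j : ℤ, |(ζ₂ (j + 1) - ζ₂ j) 0|
                  = ∑' j : ℤ, |lwMinmodStepR ν (fun i => ζ₁ i 0) (j + 1) -
                      lwMinmodStepR ν (fun i => ζ₁ i 0) j| := tsum_congr ec0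
                _ ≤ ∑' j : ℤ, |(fun i => ζ₁ i 0) (j + 1) - (fun i => ζ₁ i 0) j| :=
                    R_tvd hν₀ hν₁ (fun i => ζ₁ i 0) t hu₀
                _ = ∑' j : ℤ, |(ζ₁ (j + 1) - ζ₁ j) 0| := tsum_congr fun j => rfl
            · calc ∑' j : ℤ, |(ζ₂ (j + 1) - ζ₂ j) 1|
                  = ∑' j : ℤ, |lwMinmodStepL ν (fun i => ζ₁ i 1) (j + 1) -
                      lwMinmodStepL ν (fun i => ζ₁ i 1) j| := tsum_congr ec1
                _ ≤ ∑' j : ℤ, |(fun i => ζ₁ i 1) (j + 1) - (fun i => ζ₁ i 1) j| :=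
                    L_tvd hν₀ hν₁ (fun i => ζ₁ i 1) t hu₁
                _ = ∑' j : ℤ, |(ζ₁ (j + 1) - ζ₁ j) 1| := tsum_congr fun j => rfl
        _ = ∑' j : ℤ, (|(ζ₁ (j + 1) - ζ₁ j) 0| + |(ζ₁ (j + 1) - ζ₁ j) 1|) :=
            (Summable.tsum_add hg0 hg1).symm
    exact le_trans step3 (le_trans step2 step1)
  · -- Lyapunov part
    have step3 : (∑' j : ℤ, ((ζ₃ j 0) ^ 2 + (ζ₃ j 1) ^ 2)) ≤
        ∑' j : ℤ, ((ζ₂ j 0) ^ 2 + (ζ₂ j 1) ^ 2) :=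
      Summable.tsum_le_tsum (fun j => hodeLy ζ₂ j) (hSLy ζ₃ (shifts t) hζ₃0) (hSLy ζ₂ (shifts t) hζ₂0)
    have step1 : (∑' j : ℤ, ((ζ₁ j 0) ^ 2 + (ζ₁ j 1) ^ 2)) ≤
        ∑' j : ℤ, ((ξ j 0) ^ 2 + (ξ j 1) ^ 2) :=
      Summable.tsum_le_tsum (fun j => hodeLy ξ j) (hSLy ζ₁ t hζ₁0) (hSLy ξ t hξ0)
    have step2 : (∑' j : ℤ, ((ζ₂ j 0) ^ 2 + (ζ₂ j 1) ^ 2)) ≤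
        ∑' j : ℤ, ((ζ₁ j 0) ^ 2 + (ζ₁ j 1) ^ 2) := by
      have hf0 : Summable (fun j : ℤ => (ζ₂ j 0) ^ 2) :=
        summable_of_ne_finset_zero (s := shifts t) (by
          intro j hj; rw [hζ₂0 j hj]; simp)
      have hf1 : Summable (fun j : ℤ => (ζ₂ j 1) ^ 2) :=
        summable_of_ne_finset_zero (s := shifts t) (by
          intro j hj; rw [hζ₂0 j hj]; simp)
      have hg0 : Summable (fun j : ℤ => (ζ₁ j 0) ^ 2) :=
        summable_of_ne_finset_zero (s := t) (by
          intro j hj; rw [hζ₁0 j hj]; simp)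
      have hg1 : Summable (fun j : ℤ => (ζ₁ j 1) ^ 2) :=
        summable_of_ne_finset_zero (s := t) (by
          intro j hj; rw [hζ₁0 j hj]; simp)
      calc ∑' j : ℤ, ((ζ₂ j 0) ^ 2 + (ζ₂ j 1) ^ 2)
          = (∑' j : ℤ, (ζ₂ j 0) ^ 2) + ∑' j : ℤ, (ζ₂ j 1) ^ 2 := Summable.tsum_add hf0 hf1
        _ ≤ (∑' j : ℤ, (ζ₁ j 0) ^ 2) + ∑' j : ℤ, (ζ₁ j 1) ^ 2 := by
            apply add_le_add
            · calc ∑' j : ℤ, (ζ₂ j 0) ^ 2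
                  = ∑' j : ℤ, (lwMinmodStepR ν (fun i => ζ₁ i 0) j) ^ 2 :=
                    tsum_congr fun j => by rw [hP0comp]
                _ ≤ ∑' j : ℤ, ((fun i => ζ₁ i 0) j) ^ 2 :=
                    R_l2 hν₀ hν₁ (fun i => ζ₁ i 0) t hu₀
                _ = ∑' j : ℤ, (ζ₁ j 0) ^ 2 := tsum_congr fun j => rfl
            · calc ∑' j : ℤ, (ζ₂ j 1) ^ 2
                  = ∑' j : ℤ, (lwMinmodStepL ν (fun i => ζ₁ i 1) j) ^ 2 :=
                    tsum_congr fun j => by rw [hP1comp]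
                _ ≤ ∑' j : ℤ, ((fun i => ζ₁ i 1) j) ^ 2 :=
                    L_l2 hν₀ hν₁ (fun i => ζ₁ i 1) t hu₁
                _ = ∑' j : ℤ, (ζ₁ j 1) ^ 2 := tsum_congr fun j => rfl
        _ = ∑' j : ℤ, ((ζ₁ j 0) ^ 2 + (ζ₁ j 1) ^ 2) := (Summable.tsum_add hg0 hg1).symm
    exact le_trans step3 (le_trans step2 step1)
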